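/- Let E be an elliptic curve over F_q, d an integer coprime to q, and L_d the Lattès map satisfying L_d(x(P)) = x(dP) for all points P. Then a ∈ P^1(F_q) is periodic under L_d if and only if a = x(P) for some point P ∈ E(F_{q^2}) whose order is coprime to d. -/

import Mathlib

open WeierstrassCurve WeierstrassCurve.Affine

/-- The x-coordinate projection from the points of a Weierstrass curve to the projective line,
modeled as `Option`: the point at infinity maps to `none` (that is, `∞`), and an affine point
`(a, b)` maps to `some a`. -/
def xCoord {R : Type*} [CommRing R] {W : WeierstrassCurve.Affine R} : W.Point → Option R
  | .zero => none
  | .some (x := x) _ _ => some x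

/-- The embedding of `P^1(F)` into `P^1(K)` induced by a field extension `F → K`;
`none` is the point at infinity. -/
def p1Emb (F K : Type*) [Field F] [Field K] [Algebra F K] : Option F → Option K :=
  Option.map (algebraMap F K)

open Polynomial

section Aux

/-- Nonsingular points over a finite field form a finite type. -/
lemma point_finite {R : Type*} [CommRing R] [Finite R] {W : WeierstrassCurve.Affine R} :
    Finite W.Point := by
  let f : W.Point → Option (R × R) := fun P => match P with
    | .zero => none
    | .some (x := x) (y := y) _ => some (x, y)
  classical
  haveI : Fintype R := Fintype.ofFinite R
  apply Finite.of_injective f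
  rintro (_ | _) (_ | _) h <;> simp only [f, Option.some.injEq, Prod.mk.injEq,
    reduceCtorEq] at h
  · rfl
  · obtain ⟨rfl, rfl⟩ := h; rfl

lemma eq_or_eq_neg_of_xCoord_eq {F : Type*} [Field F] {W : WeierstrassCurve.Affine F}
    {P Q : W.Point} (h : xCoord P = xCoord Q) : P = Q ∨ P = -Q := by
  cases P with
  | zero =>
    cases Q with
    | zero => exact Or.inl rfl
    | some h2 => simp [xCoord] at h
  | @some x₁ y₁ h₁ =>
    cases Q with
    | zero => simp [xCoord] at h
    | @some x₂ y₂ h₂ =>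
      obtain rfl : x₁ = x₂ := Option.some.inj h
      rcases Y_eq_of_X_eq h₁.1 h₂.1 rfl with rfl | rfl
      · exact Or.inl rfl
      · exact Or.inr rfl

lemma coprime_of_pow_smul_eq {G : Type*} [AddCommGroup G] (d : ℤ) (m : ℕ) (hm : 1 ≤ m) (P : G)
    (h : d ^ m • P = P) : (addOrderOf P).Coprime d.natAbs := by
  have h0 : (d ^ m - 1) • P = 0 := by rw [sub_smul, one_smul, h, sub_self]
  have hdvd : (addOrderOf P : ℤ) ∣ d ^ m - 1 := addOrderOf_dvd_iff_zsmul_eq_zero.mpr h0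
  set n := addOrderOf P
  have h1 : ((Nat.gcd n d.natAbs : ℤ)) ∣ d ^ m - 1 :=
    dvd_trans (Int.natCast_dvd_natCast.mpr (Nat.gcd_dvd_left _ _)) hdvd
  have h2 : ((Nat.gcd n d.natAbs : ℤ)) ∣ d ^ m := by
    refine dvd_trans (Int.natCast_dvd_natCast.mpr (Nat.gcd_dvd_right _ _)) ?_
    exact dvd_pow (Int.natAbs_dvd.mpr dvd_rfl) (by omega)
  have h3 : ((Nat.gcd n d.natAbs : ℤ)) ∣ 1 := by
    have := dvd_sub h2 h1
    simpa using this
  have h4 : Nat.gcd n d.natAbs ∣ 1 := by exact_mod_cast h3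
  exact Nat.dvd_one.mp h4

lemma exists_pow_smul_eq {G : Type*} [AddCommGroup G] [Finite G] (d : ℤ) (P : G)
    (h : (addOrderOf P).Coprime d.natAbs) : ∃ m : ℕ, 1 ≤ m ∧ d ^ m • P = P := by
  set n := addOrderOf P with hn
  have hnpos : 0 < n := addOrderOf_pos P
  have htot : 0 < n.totient := Nat.totient_pos.mpr hnpos
  refine ⟨2 * n.totient, by omega, ?_⟩
  have hcop : (d.natAbs ^ 2).Coprime n := Nat.Coprime.pow_left 2 h.symm
  have hmod : (d.natAbs ^ 2) ^ n.totient ≡ 1 [MOD n] := Nat.ModEq.pow_totient hcop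
  have hmodZ : ((d.natAbs ^ 2) ^ n.totient : ℤ) ≡ 1 [ZMOD n] := by
    exact_mod_cast Int.natCast_modEq_iff.mpr hmod
  have habs : ((d.natAbs : ℤ)) ^ 2 = d ^ 2 := by
    rw [← Int.abs_eq_natAbs, sq_abs]
  have hdvd : (n : ℤ) ∣ d ^ (2 * n.totient) - 1 := by
    have h5 := Int.ModEq.dvd hmodZ
    have h6 : (n : ℤ) ∣ ((d.natAbs : ℤ) ^ 2) ^ n.totient - 1 := dvd_sub_comm.mp h5
    rwa [habs, ← pow_mul] at h6
  obtain ⟨t, ht⟩ := hdvd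
  have hz : (d ^ (2 * n.totient) - 1) • P = 0 := by
    rw [ht, mul_comm, mul_smul, natCast_zsmul, hn, addOrderOf_nsmul_eq_zero, smul_zero]
  rw [sub_smul, one_smul, sub_eq_zero] at hz
  exact hz

/-- Every `x`-coordinate in `F` lifts to a point of `E` over the quadratic extension `K`. -/
lemma exists_point_above {F : Type*} [Field F] [Fintype F] {K : Type*} [Field K] [Fintype K]
    [Algebra F K] (hK : Fintype.card K = (Fintype.card F) ^ 2)
    (E : WeierstrassCurve F) [E.IsElliptic] (x : F) :
    ∃ P : Affine.Point (E.baseChange K), xCoord P = some (algebraMap F K x) := by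
  classical
  set q := Fintype.card F with hq
  set φ := algebraMap F K with hφ
  set b : F := E.a₁ * x + E.a₃ with hb
  set c : F := x ^ 3 + E.a₂ * x ^ 2 + E.a₄ * x + E.a₆ with hc
  set p : F[X] := X ^ 2 + C b * X - C c with hp
  have hpdeg : p.natDegree = 2 := by
    rw [hp]
    compute_degree!
  have hpne : p ≠ 0 := fun h => by simp [h] at hpdeg
  have hpu : ¬ IsUnit p := fun h => by
    have := Polynomial.natDegree_eq_zero_of_isUnit h
    omega
  obtain ⟨g, hgirr, hgdvd⟩ := WfDvdMonoid.exists_irreducible_factor hpu hpne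
  have hgne : g ≠ 0 := hgirr.ne_zero
  have hgdeg_le : g.natDegree ≤ 2 := hpdeg ▸ Polynomial.natDegree_le_of_dvd hgdvd hpne
  have hgdeg_pos : 0 < g.natDegree :=
    Polynomial.natDegree_pos_iff_degree_pos.mpr (Polynomial.degree_pos_of_irreducible hgirr)
  haveI := Fact.mk hgirr
  let pb := AdjoinRoot.powerBasis hgne
  haveI : Module.Finite F (AdjoinRoot g) := pb.finite
  haveI : Finite (AdjoinRoot g) := Module.finite_of_finite F
  haveI : Fintype (AdjoinRoot g) := Fintype.ofFinite _
  have hfr : Module.finrank F (AdjoinRoot g) = g.natDegree := by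
    rw [pb.finrank]
    rfl
  have hcard : Fintype.card (AdjoinRoot g) = q ^ g.natDegree := by
    rw [Module.card_eq_pow_finrank (K := F) (V := AdjoinRoot g), hfr]
  set α := AdjoinRoot.root g with hα
  have hroot : (Polynomial.aeval α) g = 0 := by
    rw [Polynomial.aeval_def, AdjoinRoot.algebraMap_eq]
    exact AdjoinRoot.eval₂_root g
  have hint : IsIntegral F α := IsIntegral.of_finite F α
  have hαq : α ^ q ^ g.natDegree = α := by
    rw [← hcard]
    exact FiniteField.pow_card α
  have hα2 : α ^ q ^ 2 = α := by
    have hdeg : g.natDegree = 1 ∨ g.natDegree = 2 := by omega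
    rcases hdeg with h | h
    · rw [h, pow_one] at hαq
      rw [sq, pow_mul, hαq, hαq]
    · rwa [h] at hαq
  have hgdvd2 : g ∣ (X ^ q ^ 2 - X : F[X]) := by
    have h1 : minpoly F α ∣ g := minpoly.dvd F α hroot
    have h2 : minpoly F α ∣ (X ^ q ^ 2 - X : F[X]) := minpoly.dvd F α (by
      simp only [map_sub, map_pow, Polynomial.aeval_X]
      rw [hα2, sub_self])
    exact ((minpoly.irreducible hint).dvd_symm hgirr h1).trans h2
  have hXne : (X ^ q ^ 2 - X : F[X]) ≠ 0 :=
    FiniteField.X_pow_card_pow_sub_X_ne_zero F (n := 2) two_ne_zero Fintype.one_lt_card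
  have hsplitsBig : Splits ((X ^ q ^ 2 - X : F[X]).map φ) := by
    have hmap : (X ^ q ^ 2 - X : F[X]).map φ = (X ^ Fintype.card K - X : K[X]) := by
      rw [Polynomial.map_sub, Polynomial.map_pow, Polynomial.map_X, hK]
    rw [hmap, Polynomial.splits_iff_card_roots, FiniteField.roots_X_pow_card_sub_X,
      FiniteField.X_pow_card_sub_X_natDegree_eq K Fintype.one_lt_card]
    exact Finset.card_univ
  have hgsplits : Splits (g.map φ) :=
    hsplitsBig.of_dvd (Polynomial.map_ne_zero hXne) (Polynomial.map_dvd φ hgdvd2)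
  obtain ⟨y, hy⟩ := hgsplits.exists_eval_eq_zero
    (by rw [Polynomial.degree_map]; exact ne_of_gt (Polynomial.degree_pos_of_irreducible hgirr))
  obtain ⟨r, hr⟩ := hgdvd
  have hyp : Polynomial.eval₂ φ y p = 0 := by
    rw [hr, Polynomial.eval₂_mul, ← Polynomial.eval_map, hy, zero_mul]
  have heq : y ^ 2 + φ b * y - φ c = 0 := by
    simpa [hp, Polynomial.eval₂_add, Polynomial.eval₂_sub, Polynomial.eval₂_mul,
      Polynomial.eval₂_pow, Polynomial.eval₂_X, Polynomial.eval₂_C] using hyp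
  have heq' : y ^ 2 + (φ E.a₁ * φ x + φ E.a₃) * y
      - ((φ x) ^ 3 + φ E.a₂ * (φ x) ^ 2 + φ E.a₄ * φ x + φ E.a₆) = 0 := by
    rw [hb, hc] at heq
    simpa only [map_add, map_mul, map_pow] using heq
  have hE : (E.baseChange K).toAffine.Equation (φ x) y := by
    rw [equation_iff]
    simp only [WeierstrassCurve.baseChange, map_a₁, map_a₂, map_a₃, map_a₄, map_a₆]
    linear_combination heq'
  haveI : (E.baseChange K).IsElliptic := inferInstanceAs (E.map (algebraMap F K)).IsElliptic
  have hns : (E.baseChange K).toAffine.Nonsingular (φ x) y :=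
    equation_iff_nonsingular.mp hE
  exact ⟨Point.some _ _ hns, rfl⟩

end Aux

open Classical in
/-- Let `E` be an elliptic curve over a finite field `F` with `q` elements, `K/F` the quadratic
extension, `d` an integer coprime to `q`, and `L_d` the Lattès map of `E`, i.e. a self-map of
`P^1(K)` satisfying `L_d (x P) = x (d • P)` for all points `P ∈ E(K)`. Then `a ∈ P^1(F)` is
periodic under `L_d` if and only if `a = x P` for some `P ∈ E(K)` of order coprime to `d`. -/
theorem lattes_periodic_iff
    {F : Type*} [Field F] [Fintype F] {K : Type*} [Field K] [Fintype K] [Algebra F K]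
    (hK : Fintype.card K = (Fintype.card F) ^ 2)
    (E : WeierstrassCurve F) [E.IsElliptic]
    (d : ℤ) (hd : Int.gcd d (Fintype.card F) = 1)
    (Ld : Option K → Option K) (hLd : ∀ P : Affine.Point (E.baseChange K), Ld (xCoord P) = xCoord (d • P)) :
    ∀ a : Option F,
      (∃ m : ℕ, 1 ≤ m ∧ Ld^[m] (p1Emb F K a) = p1Emb F K a) ↔
        ∃ P : Affine.Point (E.baseChange K), xCoord P = p1Emb F K a ∧ (addOrderOf P).Coprime d.natAbs := by
  haveI : Finite (Affine.Point (E.baseChange K)) := point_finite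
  have iter : ∀ (m : ℕ) (P : Affine.Point (E.baseChange K)), Ld^[m] (xCoord P) = xCoord (d ^ m • P) := by
    intro m
    induction m with
    | zero => intro P; simp
    | succ k ih =>
      intro P
      rw [Function.iterate_succ_apply', ih P, hLd (d ^ k • P), smul_smul, ← pow_succ']
  intro a
  constructor
  · rintro ⟨m, hm, hper⟩
    obtain ⟨P0, hP0⟩ : ∃ P : Affine.Point (E.baseChange K), xCoord P = p1Emb F K a := by
      cases a with
      | none => exact ⟨0, rfl⟩
      | some x => simpa [p1Emb] using exists_point_above hK E x
    have hx : xCoord (d ^ m • P0) = xCoord P0 := by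
      rw [← iter m P0, hP0, hper]
    rcases eq_or_eq_neg_of_xCoord_eq hx with h | h
    · exact ⟨P0, hP0, coprime_of_pow_smul_eq d m hm P0 h⟩
    · refine ⟨P0, hP0, coprime_of_pow_smul_eq d (2 * m) (by omega) P0 ?_⟩
      have h2m : d ^ (2 * m) • P0 = d ^ m • (d ^ m • P0) := by
        rw [smul_smul, ← pow_add, two_mul]
      rw [h2m, h, smul_neg, h, neg_neg]
  · rintro ⟨P, hxP, hcop⟩
    obtain ⟨m, hm, hsm⟩ := exists_pow_smul_eq d P hcop
    exact ⟨m, hm, by rw [← hxP, iter, hsm]⟩
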